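/- Let n ≥ 2, z ∈ ℝⁿ, G = ℝⁿ \ {z}, x ∈ G, and r ∈ (1/2, 1]. Then the metric ball B_s(x,r) = {y ∈ G : s_G(x,y) < r} is not a convex subset of ℝⁿ. -/

import Mathlib

open scoped RealInnerProductSpace


/-- The triangular ratio metric `s_G(x,y) = sup_{z ∈ ∂G} |x−y|/(|z−x|+|z−y|)`. -/
noncomputable def sMetric {n : ℕ} (G : Set (EuclideanSpace ℝ (Fin n)))
    (x y : EuclideanSpace ℝ (Fin n)) : ℝ :=
  ⨆ z ∈ frontier G, dist x y / (dist z x + dist z y)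

/-- The metric ball `B_s(x,r) = {y ∈ G : s_G(x,y) < r}`. -/
def sBall {n : ℕ} (G : Set (EuclideanSpace ℝ (Fin n))) (x : EuclideanSpace ℝ (Fin n))
    (r : ℝ) : Set (EuclideanSpace ℝ (Fin n)) :=
  {y ∈ G | sMetric G x y < r}

set_option maxHeartbeats 1000000 in
lemma key_real_ineq (a r u v B d : ℝ) (ha : 0 < a) (hr1 : 1/2 < r) (hr2 : r ≤ 1)
    (hu : u * (1 + r) = a * (1 - r)) (hv : 2 * v = a * (2 * r - 1)) (hu0 : 0 ≤ u)
    (hB0 : 0 ≤ B) (hd0 : 0 ≤ d) (hB : B ^ 2 = u ^ 2 + v ^ 2)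
    (hd : d ^ 2 = (a - u) ^ 2 + v ^ 2) : d < r * (a + B) := by
  have har : a - u = r * (a + u) := by nlinarith
  have hv0 : 0 < v := by nlinarith
  have hBu : u < B := by nlinarith [sq_nonneg (B + u)]
  have hBle : B ≤ u + v := by nlinarith [sq_nonneg (u + v - B)]
  have h3 : (1 - r ^ 2) * u = a * (1 - r) ^ 2 := by nlinarith [hu]
  have h2 : 2 * r ^ 2 * a - (1 - r ^ 2) * (B + u) > 0 := by
    nlinarith [mul_nonneg (by nlinarith : (0:ℝ) ≤ 1 - r ^ 2) (by linarith : (0:ℝ) ≤ u + v - B)]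
  have har2 : (a - u) ^ 2 = r ^ 2 * (a + u) ^ 2 := by rw [har]; ring
  have hv2 : v ^ 2 = (B - u) * (B + u) := by nlinarith
  have hsq : d ^ 2 < (r * (a + B)) ^ 2 := by
    nlinarith [mul_pos (sub_pos.mpr hBu) h2]
  have hrb : 0 < r * (a + B) := mul_pos (by linarith) (by linarith)
  nlinarith [hsq, hd0, hrb]


lemma sMetric_compl_singleton {n : ℕ} (z x y : EuclideanSpace ℝ (Fin n))
    (hfr : frontier ({z}ᶜ : Set (EuclideanSpace ℝ (Fin n))) = {z}) :
    sMetric {z}ᶜ x y = dist x y / (dist z x + dist z y) := by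
  have hnn : 0 ≤ dist x y / (dist z x + dist z y) := div_nonneg dist_nonneg (by positivity)
  rw [sMetric, hfr]
  apply le_antisymm
  · apply Real.iSup_le _ hnn
    intro w
    apply Real.iSup_le _ hnn
    intro hw
    rw [Set.mem_singleton_iff] at hw; subst hw; exact le_rfl
  · have h1 : (⨆ _ : z ∈ ({z} : Set (EuclideanSpace ℝ (Fin n))),
        dist x y / (dist z x + dist z y)) = dist x y / (dist z x + dist z y) :=
      ciSup_pos rfl
    rw [← h1]
    refine le_ciSup (f := fun w => ⨆ _ : w ∈ ({z} : Set (EuclideanSpace ℝ (Fin n))),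
      dist x y / (dist w x + dist w y)) ?_ z
    refine ⟨dist x y / (dist z x + dist z y), ?_⟩
    rintro b ⟨w, rfl⟩
    apply Real.iSup_le _ hnn
    intro hw; rw [Set.mem_singleton_iff] at hw; subst hw; exact le_rfl

set_option maxHeartbeats 1000000 in
/-- Let n ≥ 2, z ∈ ℝⁿ, G = ℝⁿ \ {z}, x ∈ G, and r ∈ (1/2, 1]. Then the metric ball
B_s(x,r) is not a convex subset of ℝⁿ. -/
theorem sBall_punctured_not_convex (n : ℕ) (hn : 2 ≤ n) (z : EuclideanSpace ℝ (Fin n))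
    (x : EuclideanSpace ℝ (Fin n)) (hx : x ≠ z) (r : ℝ) (hr : r ∈ Set.Ioc (1/2 : ℝ) 1) :
    ¬ Convex ℝ (sBall {z}ᶜ x r) := by
  obtain ⟨hr1, hr2⟩ := hr
  haveI : Nontrivial (EuclideanSpace ℝ (Fin n)) := ⟨x, z, hx⟩
  have hfr : frontier ({z}ᶜ : Set (EuclideanSpace ℝ (Fin n))) = {z} := by
    rw [frontier_compl, frontier, closure_singleton, interior_singleton, Set.diff_empty]
  -- basic data
  set w : EuclideanSpace ℝ (Fin n) := x - z with hw_def
  have hw : w ≠ 0 := sub_ne_zero.mpr hx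
  set a : ℝ := ‖w‖ with ha_def
  have ha : 0 < a := norm_pos_iff.mpr hw
  -- an orthogonal unit vector
  obtain ⟨e, he0, heo⟩ : ∃ e : EuclideanSpace ℝ (Fin n), e ≠ 0 ∧ (inner ℝ w e : ℝ) = 0 := by
    by_contra h
    push_neg at h
    have hbot : ((ℝ ∙ w)ᗮ : Submodule ℝ (EuclideanSpace ℝ (Fin n))) = ⊥ := by
      rw [Submodule.eq_bot_iff]
      intro e he
      by_contra he0
      exact h e he0 ((Submodule.mem_orthogonal (ℝ ∙ w) e).mp he w
        (Submodule.mem_span_singleton_self w))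
    rw [Submodule.orthogonal_eq_bot_iff] at hbot
    have h1 : Module.finrank ℝ (ℝ ∙ w) = 1 := finrank_span_singleton hw
    have h2 : Module.finrank ℝ (EuclideanSpace ℝ (Fin n)) = n := finrank_euclideanSpace_fin
    rw [hbot, finrank_top, h2] at h1
    omega
  have hee : 0 < ‖e‖ := norm_pos_iff.mpr he0
  set eu : EuclideanSpace ℝ (Fin n) := ‖e‖⁻¹ • e with heu_def
  have heu1 : ‖eu‖ = 1 := by
    rw [heu_def, norm_smul, norm_inv, norm_norm, inv_mul_cancel₀ (ne_of_gt hee)]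
  have heuo : (inner ℝ w eu : ℝ) = 0 := by
    rw [heu_def, real_inner_smul_right, heo, mul_zero]
  -- parameters
  set c : ℝ := (1 - r) / (1 + r) with hc_def
  have h1r : (0:ℝ) < 1 + r := by linarith
  have hc0 : 0 ≤ c := div_nonneg (by linarith) (by linarith)
  have hc1 : c < 1 := by
    rw [hc_def, div_lt_one h1r]; linarith
  set u : ℝ := c * a with hu_def
  set v : ℝ := a * (2 * r - 1) / 2 with hv_def
  have hv0 : 0 < v := by
    rw [hv_def]; nlinarith
  have hu0 : 0 ≤ u := mul_nonneg hc0 ha.le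
  have hua : u < a := by
    rw [hu_def]; nlinarith
  have har : a - u = r * (a + u) := by
    rw [hu_def, hc_def]
    field_simp
    ring
  -- the points
  set m : EuclideanSpace ℝ (Fin n) := z + c • w with hm_def
  set p : EuclideanSpace ℝ (Fin n) := m + v • eu with hp_def
  set q : EuclideanSpace ℝ (Fin n) := m - v • eu with hq_def
  have hxz : x = z + w := by rw [hw_def]; abel
  -- norm computations
  have hnorm : ∀ s t : ℝ, ‖s • w + t • eu‖ ^ 2 = (s * a) ^ 2 + t ^ 2 := by
    intro s t
    rw [norm_add_sq_real, norm_smul, norm_smul, real_inner_smul_left,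
      real_inner_smul_right, heuo, heu1]
    simp only [Real.norm_eq_abs, mul_one, mul_zero]
    rw [mul_pow, mul_pow, sq_abs, sq_abs]
    ring
  have hdzx : dist z x = a := by
    rw [dist_eq_norm, hxz, ← norm_neg]
    congr 1
    abel
  have hdzp : dist z p ^ 2 = u ^ 2 + v ^ 2 := by
    have hzp : z - p = -(c • w + v • eu) := by rw [hp_def, hm_def]; abel
    rw [dist_eq_norm, hzp, norm_neg, hnorm c v, hu_def]
  have hdzq : dist z q ^ 2 = u ^ 2 + v ^ 2 := by
    have hzq : z - q = -(c • w + (-v) • eu) := by rw [hq_def, hm_def, neg_smul]; abel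
    rw [dist_eq_norm, hzq, norm_neg, hnorm c (-v), hu_def]; ring
  have hdxp : dist x p ^ 2 = (a - u) ^ 2 + v ^ 2 := by
    have hxp : x - p = (1 - c) • w + (-v) • eu := by
      rw [hp_def, hm_def, hxz, sub_smul, one_smul, neg_smul]; abel
    rw [dist_eq_norm, hxp, hnorm (1 - c) (-v), hu_def]; ring
  have hdxq : dist x q ^ 2 = (a - u) ^ 2 + v ^ 2 := by
    have hxq : x - q = (1 - c) • w + v • eu := by
      rw [hq_def, hm_def, hxz, sub_smul, one_smul]; abel
    rw [dist_eq_norm, hxq, hnorm (1 - c) v, hu_def]; ring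
  have hdzm : dist z m = u := by
    have hzm : z - m = -(c • w) := by rw [hm_def]; abel
    rw [dist_eq_norm, hzm, norm_neg, norm_smul, Real.norm_eq_abs, abs_of_nonneg hc0, hu_def]
  have hdxm : dist x m = a - u := by
    have hxm : x - m = (1 - c) • w := by
      rw [hm_def, hxz, sub_smul, one_smul]; abel
    rw [dist_eq_norm, hxm, norm_smul, Real.norm_eq_abs,
      abs_of_nonneg (by linarith : (0:ℝ) ≤ 1 - c), hu_def]
    ring
  have huu : u * (1 + r) = a * (1 - r) := by
    rw [hu_def, hc_def]; field_simp
  have hvv : 2 * v = a * (2 * r - 1) := by rw [hv_def]; ring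
  have hkey : ∀ y : EuclideanSpace ℝ (Fin n),
      dist z y ^ 2 = u ^ 2 + v ^ 2 → dist x y ^ 2 = (a - u) ^ 2 + v ^ 2 →
      dist x y < r * (a + dist z y) :=
    fun y hzy hxy => key_real_ineq a r u v (dist z y) (dist x y) ha hr1 hr2 huu hvv hu0
      dist_nonneg dist_nonneg hzy hxy
  -- membership
  have hp_mem : p ∈ sBall {z}ᶜ x r := by
    constructor
    · intro hpz
      rw [Set.mem_singleton_iff] at hpz
      have : dist z p = 0 := by rw [hpz]; simp
      rw [this] at hdzp; nlinarith
    · rw [sMetric_compl_singleton z x p hfr, hdzx]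
      have h := hkey p hdzp hdxp
      have hd : 0 < a + dist z p := by positivity
      rw [div_lt_iff₀ hd]
      linarith [h]
  have hq_mem : q ∈ sBall {z}ᶜ x r := by
    constructor
    · intro hqz
      rw [Set.mem_singleton_iff] at hqz
      have : dist z q = 0 := by rw [hqz]; simp
      rw [this] at hdzq; nlinarith
    · rw [sMetric_compl_singleton z x q hfr, hdzx]
      have h := hkey q hdzq hdxq
      have hd : 0 < a + dist z q := by positivity
      rw [div_lt_iff₀ hd]
      linarith [h]
  have hm_not : m ∉ sBall {z}ᶜ x r := by
    rintro ⟨hmG, hms⟩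
    rw [sMetric_compl_singleton z x m hfr, hdzx, hdzm, hdxm] at hms
    rw [div_lt_iff₀ (by linarith : (0:ℝ) < a + u), har] at hms
    have : (0:ℝ) < a + u := by linarith
    nlinarith
  intro hconv
  have hmid : (1/2 : ℝ) • p + (1/2 : ℝ) • q = m := by
    rw [hp_def, hq_def]; module
  have := hconv hp_mem hq_mem (by norm_num : (0:ℝ) ≤ 1/2) (by norm_num : (0:ℝ) ≤ 1/2)
    (by norm_num : (1/2 : ℝ) + 1/2 = 1)
  rw [hmid] at this
  exact hm_not this
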